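/- Every 3-dimensional real Lie algebra 𝔤 is contact (i.e. admits α ∈ 𝔤* with α ∧ dα ≠ 0), except for the abelian Lie algebra and the Lie algebra with basis x, y, z and brackets [x,z] = x, [y,z] = y, [x,y] = 0. -/

import Mathlib

open scoped TensorProduct

variable {V : Type*} [AddCommGroup V] [Module ℝ V]

noncomputable def wedgeF {k l : ℕ} (f : V [⋀^Fin k]→ₗ[ℝ] ℝ) (g : V [⋀^Fin l]→ₗ[ℝ] ℝ) :
    V [⋀^Fin (k + l)]→ₗ[ℝ] ℝ :=
  ((TensorProduct.lid ℝ ℝ).toLinearMap.compAlternatingMap (f.domCoprod g)).domDomCongr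
    finSumFinEquiv

noncomputable def wpowF (ω : V [⋀^Fin 2]→ₗ[ℝ] ℝ) : (n : ℕ) → V [⋀^Fin (2 * n)]→ₗ[ℝ] ℝ
  | 0 => AlternatingMap.constOfIsEmpty ℝ V (Fin 0) 1
  | n + 1 => wedgeF (wpowF ω n) ω

noncomputable def oneAlt (α : Module.Dual ℝ V) : V [⋀^Fin 1]→ₗ[ℝ] ℝ :=
  AlternatingMap.ofSubsingleton ℝ V ℝ 0 α

noncomputable def bilinToAlt (B : V →ₗ[ℝ] V →ₗ[ℝ] ℝ) (hB : ∀ x, B x x = 0) :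
    V [⋀^Fin 2]→ₗ[ℝ] ℝ where
  toFun v := B (v 0) (v 1)
  map_update_add' := by
    intro _ v i x y
    fin_cases i <;> simp
  map_update_smul' := by
    intro _ v i c x
    fin_cases i <;> simp
  map_eq_zero_of_eq' := by
    intro v i j hij hne
    have h01 : v 0 = v 1 := by
      fin_cases i <;> fin_cases j <;> simp_all
    show B (v 0) (v 1) = 0
    rw [h01]; exact hB _

variable {L : Type*} [LieRing L] [LieAlgebra ℝ L]

noncomputable def ceD (α : Module.Dual ℝ L) : L [⋀^Fin 2]→ₗ[ℝ] ℝ :=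
  bilinToAlt
    (LinearMap.mk₂ ℝ (fun x y => -α ⁅x, y⁆)
      (fun x x' y => by simp [add_lie]; exact add_comm _ _)
      (fun c x y => by simp [smul_lie])
      (fun x y y' => by simp [lie_add]; exact add_comm _ _)
      (fun c x y => by simp [lie_smul]))
    (fun x => by simp)

/-- closedness of a 2-cochain under the Chevalley–Eilenberg differential -/
def IsCEClosed (ω : L [⋀^Fin 2]→ₗ[ℝ] ℝ) : Prop :=
  ∀ x y z : L, ω ![⁅x, y⁆, z] - ω ![⁅x, z⁆, y] + ω ![⁅y, z⁆, x] = 0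

/- ######## auxiliary material ######## -/

section Aux

open Equiv

lemma fix_mem_aux7 (π : Equiv.Perm (Fin 1 ⊕ Fin 2)) (h : π (Sum.inl 0) = Sum.inl 0) :
    π ∈ (Equiv.Perm.sumCongrHom (Fin 1) (Fin 2)).range := by
  have key : ∀ i : Fin 2, ∃ j, π (Sum.inr i) = Sum.inr j := by
    intro i
    cases hj : π (Sum.inr i) with
    | inl a =>
      exfalso
      have ha : (Sum.inl a : Fin 1 ⊕ Fin 2) = Sum.inl 0 := by
        congr 1; exact Subsingleton.elim a 0
      rw [ha, ← h] at hj
      exact Sum.inl_ne_inr (π.injective hj).symm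
    | inr j => exact ⟨j, rfl⟩
  choose f hf using key
  have hfinj : Function.Injective f := fun i j hij => by
    have := π.injective (by rw [hf i, hf j, hij] : π (Sum.inr i) = π (Sum.inr j))
    exact Sum.inr_injective this
  let sr : Equiv.Perm (Fin 2) := Equiv.ofBijective f
    ((Fintype.bijective_iff_injective_and_card f).2 ⟨hfinj, rfl⟩)
  refine ⟨(1, sr), ?_⟩
  ext x
  cases x with
  | inl a =>
    have : a = 0 := Subsingleton.elim a 0
    subst this
    simpa [Equiv.Perm.sumCongrHom] using h.symm
  | inr i =>
    simpa [Equiv.Perm.sumCongrHom, sr, Equiv.ofBijective] using (hf i).symm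

noncomputable def msEquiv7 : (Fin 1 ⊕ Fin 2) ≃ Equiv.Perm.ModSumCongr (Fin 1) (Fin 2) where
  toFun i := Quotient.mk'' (Equiv.swap (Sum.inl 0) i)
  invFun := Quotient.lift (fun σ : Equiv.Perm (Fin 1 ⊕ Fin 2) => σ (Sum.inl 0)) (by
    intro σ τ hrel
    have h : σ⁻¹ * τ ∈ (Equiv.Perm.sumCongrHom (Fin 1) (Fin 2)).range :=
      QuotientGroup.leftRel_apply.mp hrel
    obtain ⟨⟨sl, sr⟩, hx⟩ := h
    have := congrArg (fun (p : Equiv.Perm (Fin 1 ⊕ Fin 2)) => σ (p (Sum.inl 0))) hx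
    simp only [Equiv.Perm.sumCongrHom_apply, Equiv.Perm.sumCongr_apply, Sum.map_inl,
      Equiv.Perm.coe_mul, Function.comp_apply] at this
    simpa [Subsingleton.elim (sl 0) 0] using this)
  left_inv i := by simp
  right_inv := by
    refine Quotient.ind fun σ => ?_
    apply Quotient.sound
    apply QuotientGroup.leftRel_apply.mpr
    apply fix_mem_aux7
    simp [Equiv.swap_inv]

lemma wedgeF_one_two_apply (α : Module.Dual ℝ V) (g : V [⋀^Fin 2]→ₗ[ℝ] ℝ) (v : Fin 3 → V) :
    wedgeF (oneAlt α) g v =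
      α (v 0) * g ![v 1, v 2] - α (v 1) * g ![v 0, v 2] - α (v 2) * g ![v 1, v 0] := by
  have h1 : wedgeF (oneAlt α) g v =
      TensorProduct.lid ℝ ℝ (((oneAlt α).domCoprod g) (v ∘ finSumFinEquiv)) := rfl
  rw [h1, AlternatingMap.domCoprod_apply, MultilinearMap.sum_apply,
    ← Equiv.sum_comp msEquiv7, Fintype.sum_sum_type]
  simp only [Finset.univ_unique, Finset.sum_singleton, Fin.sum_univ_two]
  rw [show (default : Fin 1) = 0 from rfl]
  show TensorProduct.lid ℝ ℝ
    (AlternatingMap.domCoprod.summand (oneAlt α) g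
        (Quotient.mk'' (Equiv.swap (Sum.inl 0) (Sum.inl 0))) (v ∘ finSumFinEquiv)
     + (AlternatingMap.domCoprod.summand (oneAlt α) g
        (Quotient.mk'' (Equiv.swap (Sum.inl 0) (Sum.inr 0))) (v ∘ finSumFinEquiv)
     + AlternatingMap.domCoprod.summand (oneAlt α) g
        (Quotient.mk'' (Equiv.swap (Sum.inl 0) (Sum.inr 1))) (v ∘ finSumFinEquiv))) = _
  rw [AlternatingMap.domCoprod.summand_mk'', AlternatingMap.domCoprod.summand_mk'',
    AlternatingMap.domCoprod.summand_mk'']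
  simp only [Equiv.swap_self, Equiv.Perm.sign_refl, one_smul,
    Equiv.Perm.sign_swap (by decide : (Sum.inl 0 : Fin 1 ⊕ Fin 2) ≠ Sum.inr 0),
    Equiv.Perm.sign_swap (by decide : (Sum.inl 0 : Fin 1 ⊕ Fin 2) ≠ Sum.inr 1),
    MultilinearMap.domDomCongr_apply, MultilinearMap.domCoprod_apply,
    AlternatingMap.coe_multilinearMap, Units.neg_smul, one_smul, map_add,
    TensorProduct.lid_tmul, Equiv.coe_refl, Function.comp_apply, id_eq]
  have lidneg : ∀ t : ℝ ⊗[ℝ] ℝ, TensorProduct.lid ℝ ℝ (-t) = -(TensorProduct.lid ℝ ℝ t) :=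
    fun t => map_neg (TensorProduct.lid ℝ ℝ).toLinearMap t
  simp only [MultilinearMap.neg_apply, lidneg, MultilinearMap.domDomCongr_apply,
    MultilinearMap.domCoprod_apply, AlternatingMap.coe_multilinearMap,
    TensorProduct.lid_tmul, smul_eq_mul, Function.comp_apply]
  have honeAlt : ∀ f : Fin 1 → V, oneAlt α f = α (f 0) := fun f => rfl
  simp only [honeAlt, TensorProduct.lid_tmul, neg_smul, smul_eq_mul]
  have e0 : (Equiv.swap (Sum.inl 0 : Fin 1 ⊕ Fin 2) (Sum.inr 0)) (Sum.inl 0) = Sum.inr 0 := by decide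
  have e1 : (Equiv.swap (Sum.inl 0 : Fin 1 ⊕ Fin 2) (Sum.inr 0)) (Sum.inr 0) = Sum.inl 0 := by decide
  have e2 : (Equiv.swap (Sum.inl 0 : Fin 1 ⊕ Fin 2) (Sum.inr 0)) (Sum.inr 1) = Sum.inr 1 := by decide
  have f0 : (Equiv.swap (Sum.inl 0 : Fin 1 ⊕ Fin 2) (Sum.inr 1)) (Sum.inl 0) = Sum.inr 1 := by decide
  have f1 : (Equiv.swap (Sum.inl 0 : Fin 1 ⊕ Fin 2) (Sum.inr 1)) (Sum.inr 0) = Sum.inr 0 := by decide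
  have f2 : (Equiv.swap (Sum.inl 0 : Fin 1 ⊕ Fin 2) (Sum.inr 1)) (Sum.inr 1) = Sum.inl 0 := by decide
  have k0 : @finSumFinEquiv 1 2 (Sum.inl 0) = (0 : Fin 3) := by decide
  have k1 : @finSumFinEquiv 1 2 (Sum.inr 0) = (1 : Fin 3) := by decide
  have k2 : @finSumFinEquiv 1 2 (Sum.inr 1) = (2 : Fin 3) := by decide
  have hA : (fun i : Fin 2 => v (finSumFinEquiv (Sum.inr i))) = ![v 1, v 2] := by
    funext i; fin_cases i <;> simp [k1, k2]
  have hB : (fun i : Fin 2 =>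
      v (finSumFinEquiv ((Equiv.swap (Sum.inl 0) (Sum.inr 0)) (Sum.inr i)))) = ![v 0, v 2] := by
    funext i; fin_cases i <;> simp [e1, e2, k0, k2]
  have hC : (fun i : Fin 2 =>
      v (finSumFinEquiv ((Equiv.swap (Sum.inl 0) (Sum.inr 1)) (Sum.inr i)))) = ![v 1, v 0] := by
    funext i; fin_cases i <;> simp [f1, f2, k0, k1]
  rw [hA, hB, hC, e0, f0, k0, k1, k2]
  ring

lemma ceD_apply7 (α : Module.Dual ℝ L) (a b : L) : ceD α ![a, b] = -α ⁅a, b⁆ := rfl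

lemma wedge_ceD_apply7 (α : Module.Dual ℝ L) (v : Fin 3 → L) :
    wedgeF (oneAlt α) (ceD α) v =
      -(α (v 0) * α ⁅v 1, v 2⁆) + α (v 1) * α ⁅v 0, v 2⁆ + α (v 2) * α ⁅v 1, v 0⁆ := by
  rw [wedgeF_one_two_apply, ceD_apply7, ceD_apply7, ceD_apply7]
  ring

/-- if the bracket has the form `⁅u,v⁆ = g u • v - g v • u` then every wedge vanishes -/
lemma wedge_zero_of_form7 (g : Module.Dual ℝ L)
    (key : ∀ u v : L, ⁅u, v⁆ = g u • v - g v • u) (α : Module.Dual ℝ L) :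
    wedgeF (oneAlt α) (ceD α) = 0 := by
  ext v
  rw [wedge_ceD_apply7]
  simp only [key, map_sub, map_smul, smul_eq_mul, AlternatingMap.zero_apply]
  ring

/-- bilinearity reduction: it suffices to check the `g`-form on a basis -/
lemma bracket_form_of_basis7 (b : Module.Basis (Fin 3) ℝ L) (g : Module.Dual ℝ L)
    (h01 : ⁅b 0, b 1⁆ = g (b 0) • b 1 - g (b 1) • b 0)
    (h02 : ⁅b 0, b 2⁆ = g (b 0) • b 2 - g (b 2) • b 0)
    (h12 : ⁅b 1, b 2⁆ = g (b 1) • b 2 - g (b 2) • b 1) :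
    ∀ u v : L, ⁅u, v⁆ = g u • v - g v • u := by
  let D : L →ₗ[ℝ] L →ₗ[ℝ] L := LinearMap.mk₂ ℝ (fun u v => ⁅u, v⁆ - (g u • v - g v • u))
    (fun u u' v => by simp only [add_lie, map_add, add_smul, smul_add]; abel)
    (fun c u v => by simp only [smul_lie, map_smul, smul_eq_mul]; module)
    (fun u v v' => by simp only [lie_add, map_add, add_smul, smul_add]; abel)
    (fun c u v => by simp only [lie_smul, map_smul, smul_eq_mul]; module)
  have hD : D = 0 := by
    apply b.ext; intro i; apply b.ext; intro j
    have hskew : ∀ m n : L, ⁅m, n⁆ = g m • n - g n • m → ⁅n, m⁆ = g n • m - g m • n := by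
      intro m n hmn
      rw [← lie_skew, hmn]; abel
    fin_cases i <;> fin_cases j <;>
      simp only [D, LinearMap.mk₂_apply, LinearMap.zero_apply, sub_eq_zero, Fin.isValue] <;>
      first
        | (rw [lie_self]; abel)
        | exact h01 | exact h02 | exact h12
        | exact hskew _ _ h01 | exact hskew _ _ h02 | exact hskew _ _ h12
  intro u v
  have := congrFun (congrArg (fun (f : L →ₗ[ℝ] L →ₗ[ℝ] L) (p : L × L) => f p.1 p.2) hD) (u, v)
  simp only [D, LinearMap.mk₂_apply, LinearMap.zero_apply, sub_eq_zero] at this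
  exact this

end Aux

/-- a 3-dimensional real Lie algebra is contact iff it is neither abelian
nor the algebra ⟨x,y,z | [x,z]=x, [y,z]=y, [x,y]=0⟩. -/
theorem stmt7 [FiniteDimensional ℝ L] (hdim : Module.finrank ℝ L = 3) :
    (∃ α : Module.Dual ℝ L, wedgeF (oneAlt α) (ceD α) ≠ 0) ↔
      (¬ IsLieAbelian L ∧
        ¬ ∃ x y z : L, LinearIndependent ℝ ![x, y, z] ∧
          ⁅x, z⁆ = x ∧ ⁅y, z⁆ = y ∧ ⁅x, y⁆ = 0) := by
  constructor
  · rintro ⟨α, hα⟩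
    constructor
    · intro habel
      apply hα
      apply wedge_zero_of_form7 (0 : Module.Dual ℝ L)
      intro u v
      simp [trivial_lie_zero]
    · rintro ⟨x, y, z, hli, hxz, hyz, hxy⟩
      apply hα
      have hcard : Fintype.card (Fin 3) = Module.finrank ℝ L := by simp [hdim]
      let b := basisOfLinearIndependentOfCardEqFinrank hli hcard
      have hb : ⇑b = ![x, y, z] := coe_basisOfLinearIndependentOfCardEqFinrank hli hcard
      have hb0 : b 0 = x := by rw [hb]; rfl
      have hb1 : b 1 = y := by rw [hb]; rfl
      have hb2 : b 2 = z := by rw [hb]; rfl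
      set g : Module.Dual ℝ L := -(b.coord 2) with hg
      have hgb0 : g (b 0) = 0 := by simp [hg, Module.Basis.coord_apply, Module.Basis.repr_self]
      have hgb1 : g (b 1) = 0 := by simp [hg, Module.Basis.coord_apply, Module.Basis.repr_self]
      have hgb2 : g (b 2) = -1 := by simp [hg, Module.Basis.coord_apply, Module.Basis.repr_self]
      apply wedge_zero_of_form7 g
      apply bracket_form_of_basis7 b g
      · rw [hgb0, hgb1, hb0, hb1, hxy]; simp
      · rw [hgb0, hgb2, hb0, hb2, hxz]; simp
      · rw [hgb1, hgb2, hb1, hb2, hyz]; simp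
  · rintro ⟨hnab, hnsp⟩
    by_contra hno
    push_neg at hno
    -- every hyperplane is a subalgebra
    have hspan : ∀ u v : L, ⁅u, v⁆ ∈ Submodule.span ℝ ({u, v} : Set L) := by
      intro u v
      by_contra hw
      -- u, v are linearly independent
      have hpair : LinearIndependent ℝ ![u, v] := by
        rw [linearIndependent_fin2]
        constructor
        · intro hv0
          have : v = 0 := by simpa using hv0
          subst this
          exact hw (by simp)
        · intro a ha
          have : u = a • v := (by simpa using ha : a • v = u).symm
          subst this
          exact hw (by simp)
      -- u, v, ⁅u,v⁆ are linearly independent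
      have hsnoc : ![u, v, ⁅u, v⁆] = Fin.snoc ![u, v] ⁅u, v⁆ := by
        funext i; fin_cases i <;> first | rfl | (simp [Fin.snoc]; rfl)
      have hrange : Set.range ![u, v] = {u, v} := by
        simp [Matrix.range_cons, Matrix.range_empty, Set.pair_comm]
      have hli : LinearIndependent ℝ ![u, v, ⁅u, v⁆] := by
        rw [hsnoc, linearIndependent_fin_snoc, hrange]
        exact ⟨hpair, hw⟩
      have hcard : Fintype.card (Fin 3) = Module.finrank ℝ L := by simp [hdim]
      let b := basisOfLinearIndependentOfCardEqFinrank hli hcard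
      have hb : ⇑b = ![u, v, ⁅u, v⁆] := coe_basisOfLinearIndependentOfCardEqFinrank hli hcard
      set α : Module.Dual ℝ L := b.coord 2 with hα
      have hau : α u = 0 := by
        have : α (b 0) = 0 := by simp [hα, Module.Basis.coord_apply, Module.Basis.repr_self]
        rwa [hb] at this
      have hav : α v = 0 := by
        have : α (b 1) = 0 := by simp [hα, Module.Basis.coord_apply, Module.Basis.repr_self]
        rwa [hb] at this
      have haw : α ⁅u, v⁆ = 1 := by
        have : α (b 2) = 1 := by simp [hα, Module.Basis.coord_apply, Module.Basis.repr_self]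
        rwa [hb] at this
      have hvu : α ⁅v, u⁆ = -1 := by
        rw [← lie_skew v u, map_neg, haw]
      have := congrFun (congrArg DFunLike.coe (hno α)) ![u, v, ⁅u, v⁆]
      rw [wedge_ceD_apply7] at this
      simp only [Matrix.cons_val_zero, Matrix.cons_val_one, Matrix.head_cons,
        Matrix.cons_val_two, Matrix.tail_cons, AlternatingMap.zero_apply] at this
      rw [hau, hav, hvu, haw] at this
      norm_num at this
    -- extract the linear form g
    let e : Module.Basis (Fin 3) ℝ L := (Module.finBasis ℝ L).reindex (finCongr hdim)
    obtain ⟨a01, b01, h01⟩ := Submodule.mem_span_pair.mp (hspan (e 0) (e 1))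
    obtain ⟨a02, c02, h02⟩ := Submodule.mem_span_pair.mp (hspan (e 0) (e 2))
    obtain ⟨b12, c12, h12⟩ := Submodule.mem_span_pair.mp (hspan (e 1) (e 2))
    -- mixed brackets give the compatibility conditions
    obtain ⟨p, q, hpq⟩ := Submodule.mem_span_pair.mp (hspan (e 0) (e 1 + e 2))
    rw [lie_add, ← h01, ← h02] at hpq
    have hq1 : q = b01 := by
      have := congrArg (e.coord 1) hpq
      simpa [Module.Basis.coord_apply, map_add, map_smul, Module.Basis.repr_self,
        Finsupp.single_apply] using this
    have hq2 : q = c02 := by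
      have := congrArg (e.coord 2) hpq
      simpa [Module.Basis.coord_apply, map_add, map_smul, Module.Basis.repr_self,
        Finsupp.single_apply] using this
    have hc1 : b01 = c02 := by rw [← hq1, hq2]
    obtain ⟨p', q', hpq'⟩ := Submodule.mem_span_pair.mp (hspan (e 1) (e 0 + e 2))
    have hsk10 : ⁅e 1, e 0⁆ = -⁅e 0, e 1⁆ := by rw [← lie_skew (e 0) (e 1), neg_neg]
    rw [lie_add, hsk10, ← h01, ← h12] at hpq'
    have hq1' : q' = -a01 := by
      have := congrArg (e.coord 0) hpq'
      simpa [Module.Basis.coord_apply, map_add, map_smul, map_neg, Module.Basis.repr_self,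
        Finsupp.single_apply] using this
    have hq2' : q' = c12 := by
      have := congrArg (e.coord 2) hpq'
      simpa [Module.Basis.coord_apply, map_add, map_smul, map_neg, Module.Basis.repr_self,
        Finsupp.single_apply] using this
    have hc2 : c12 = -a01 := by rw [← hq2', hq1']
    obtain ⟨p'', q'', hpq''⟩ := Submodule.mem_span_pair.mp (hspan (e 2) (e 0 + e 1))
    have hsk20 : ⁅e 2, e 0⁆ = -⁅e 0, e 2⁆ := by rw [← lie_skew (e 0) (e 2), neg_neg]
    have hsk21 : ⁅e 2, e 1⁆ = -⁅e 1, e 2⁆ := by rw [← lie_skew (e 1) (e 2), neg_neg]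
    rw [lie_add, hsk20, hsk21, ← h02, ← h12] at hpq''
    have hq1'' : q'' = -a02 := by
      have := congrArg (e.coord 0) hpq''
      simpa [Module.Basis.coord_apply, map_add, map_smul, map_neg, Module.Basis.repr_self,
        Finsupp.single_apply] using this
    have hq2'' : q'' = -b12 := by
      have := congrArg (e.coord 1) hpq''
      simpa [Module.Basis.coord_apply, map_add, map_smul, map_neg, Module.Basis.repr_self,
        Finsupp.single_apply] using this
    have hc3 : b12 = a02 := by
      have := hq1''.symm.trans hq2''
      linarith [neg_injective this]
    -- define g
    set g : Module.Dual ℝ L := b01 • e.coord 0 - a01 • e.coord 1 - a02 • e.coord 2 with hgdef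
    have hge0 : g (e 0) = b01 := by
      simp [hgdef, Module.Basis.coord_apply, Module.Basis.repr_self, Finsupp.single_apply]
    have hge1 : g (e 1) = -a01 := by
      simp [hgdef, Module.Basis.coord_apply, Module.Basis.repr_self, Finsupp.single_apply]
    have hge2 : g (e 2) = -a02 := by
      simp [hgdef, Module.Basis.coord_apply, Module.Basis.repr_self, Finsupp.single_apply]
    have key : ∀ u v : L, ⁅u, v⁆ = g u • v - g v • u := by
      apply bracket_form_of_basis7 e g
      · rw [hge0, hge1, ← h01]; module
      · rw [hge0, hge2, ← h02, hc1]; module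
      · rw [hge1, hge2, ← h12, hc2, hc3]; module
    by_cases hg : g = 0
    · exact hnab ⟨fun u v => by rw [key]; simp [hg]⟩
    · -- build the special basis
      have hz : ∃ z : L, g z = -1 := by
        by_contra hz
        push_neg at hz
        apply hg
        ext w
        by_contra hw
        exact hz ((-(g w)⁻¹) • w) (by
          simp only [map_smul, smul_eq_mul]
          have : g w ≠ 0 := by simpa using hw
          field_simp)
      obtain ⟨z, hgz⟩ := hz
      have hxy : ∃ x y : L, g x = 0 ∧ g y = 0 ∧ LinearIndependent ℝ ![x, y] := by
        have hker : Module.finrank ℝ (LinearMap.ker g) = 2 := by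
          have := Module.Dual.finrank_ker_add_one_of_ne_zero hg
          omega
        let kb : Module.Basis (Fin 2) ℝ (LinearMap.ker g) :=
          (Module.finBasis ℝ (LinearMap.ker g)).reindex (finCongr hker)
        refine ⟨(kb 0 : L), (kb 1 : L), (kb 0).2, (kb 1).2, ?_⟩
        have hcomp : ![((kb 0 : L) : L), (kb 1 : L)] =
            (LinearMap.ker g).subtype ∘ ![kb 0, kb 1] := by
          funext i; fin_cases i <;> rfl
        rw [hcomp]
        apply LinearIndependent.map' _ ((LinearMap.ker g).subtype)
          (Submodule.ker_subtype _)
        have : ![kb 0, kb 1] = ⇑kb := by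
          funext i; fin_cases i <;> rfl
        rw [this]
        exact kb.linearIndependent
      obtain ⟨x, y, hgx, hgy, hpair⟩ := hxy
      have hrange : Set.range ![x, y] = {x, y} := by
        simp [Matrix.range_cons, Matrix.range_empty, Set.pair_comm]
      have hznot : z ∉ Submodule.span ℝ ({x, y} : Set L) := by
        intro hzmem
        have hle : Submodule.span ℝ ({x, y} : Set L) ≤ LinearMap.ker g := by
          rw [Submodule.span_le]
          rintro w (rfl | rfl)
          · exact LinearMap.mem_ker.mpr hgx
          · exact LinearMap.mem_ker.mpr hgy
        have := LinearMap.mem_ker.mp (hle hzmem)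
        rw [hgz] at this
        norm_num at this
      have hsnoc : ![x, y, z] = Fin.snoc ![x, y] z := by
        funext i; fin_cases i <;> first | rfl | (simp [Fin.snoc]; rfl)
      have hli : LinearIndependent ℝ ![x, y, z] := by
        rw [hsnoc, linearIndependent_fin_snoc, hrange]
        exact ⟨hpair, hznot⟩
      apply hnsp
      refine ⟨x, y, z, hli, ?_, ?_, ?_⟩
      · rw [key x z, hgx, hgz]; simp
      · rw [key y z, hgy, hgz]; simp
      · rw [key x y, hgx, hgy]; simp
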